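/- Define f : [n] × {0,...,3^m - 1} → {0,1} by f(i,a) = (Σ_{j<i} 1{a_{g(j,i)} = 2} + Σ_{j>i} 1{a_{g(i,j)} = 1}) mod 2, where (a_m,...,a_1) is the ternary expansion of a, and g(i_1,i_2) = C(i_2-1,2)+i_1. For fixed i_1 < i_2 in [n], let p = g(i_1,i_2) and for u ∈ {0,1,2} let a(p,u) denote a with its p-th ternary digit replaced by u. Then: (1) for every i ∉ {i_1, i_2}, f(i, a(p,0)) = f(i, a(p,1)) = f(i, a(p,2)); (2) f(i_1, a(p,0)) = f(i_1, a(p,2)) ≠ f(i_1, a(p,1)); (3) f(i_2, a(p,0)) = f(i_2, a(p,1)) ≠ f(i_2, a(p,2)). -/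

import Mathlib

theorem stmt11 (n : ℕ) (hn : 2 ≤ n) (m : ℕ) (hm : m = Nat.choose n 2)
    (a : ℕ → ℕ) (ha : ∀ j, a j < 3)
    (g : ℕ → ℕ → ℕ) (hg : ∀ i1 i2, g i1 i2 = Nat.choose (i2 - 1) 2 + i1)
    (f : ℕ → (ℕ → ℕ) → ℕ)
    (hf : ∀ i b, f i b =
      ((∑ j ∈ Finset.Ico 1 i, if b (g j i) = 2 then 1 else 0) +
       (∑ j ∈ Finset.Ioc i n, if b (g i j) = 1 then 1 else 0)) % 2)
    (i1 i2 : ℕ) (hi1 : 1 ≤ i1) (hi12 : i1 < i2) (hi2 : i2 ≤ n)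
    (p : ℕ) (hp : p = g i1 i2) :
    (∀ i ∈ Finset.Icc 1 n, i ≠ i1 → i ≠ i2 →
        f i (Function.update a p 0) = f i (Function.update a p 1) ∧
        f i (Function.update a p 1) = f i (Function.update a p 2)) ∧
    (f i1 (Function.update a p 0) = f i1 (Function.update a p 2) ∧
      f i1 (Function.update a p 0) ≠ f i1 (Function.update a p 1)) ∧
    (f i2 (Function.update a p 0) = f i2 (Function.update a p 1) ∧
      f i2 (Function.update a p 0) ≠ f i2 (Function.update a p 2)) := by
  subst hp
  have choose2 : ∀ i : ℕ, 1 ≤ i → Nat.choose i 2 = Nat.choose (i-1) 2 + (i-1) := by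
    intro i hi
    obtain ⟨k, rfl⟩ := Nat.exists_eq_add_of_le hi
    simp [Nat.add_comm 1 k, Nat.choose_succ_succ, Nat.choose_one_right, Nat.add_comm]
  have gkey : ∀ j i j' i' : ℕ, 1 ≤ j → j < i → 1 ≤ j' → j' < i' →
      Nat.choose (i-1) 2 + j = Nat.choose (i'-1) 2 + j' → j = j' ∧ i = i' := by
    intro j i j' i' hj hji hj' hji' heq
    rcases lt_trichotomy i i' with h|h|h
    · exfalso
      have h1 : Nat.choose (i-1) 2 + j ≤ Nat.choose i 2 := by
        rw [choose2 i (by omega)]; omega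
      have h2 : Nat.choose i 2 ≤ Nat.choose (i'-1) 2 := Nat.choose_le_choose 2 (by omega)
      omega
    · subst h; constructor <;> omega
    · exfalso
      have h1 : Nat.choose (i'-1) 2 + j' ≤ Nat.choose i' 2 := by
        rw [choose2 i' (by omega)]; omega
      have h2 : Nat.choose i' 2 ≤ Nat.choose (i-1) 2 := Nat.choose_le_choose 2 (by omega)
      omega
  have hne : ∀ j i : ℕ, 1 ≤ j → j < i → (j ≠ i1 ∨ i ≠ i2) → g j i ≠ g i1 i2 := by
    intro j i hj hji hor heq
    rw [hg, hg] at heq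
    have := gkey j i i1 i2 hj hji hi1 hi12 heq
    tauto
  have hfix : ∀ (u : ℕ) (j i : ℕ), 1 ≤ j → j < i → (j ≠ i1 ∨ i ≠ i2) →
      Function.update a (g i1 i2) u (g j i) = a (g j i) := by
    intro u j i hj hji hor
    exact Function.update_of_ne (hne j i hj hji hor) u a
  refine ⟨?_, ?_, ?_⟩
  · intro i hi hne1 hne2
    simp only [Finset.mem_Icc] at hi
    have key : ∀ u u' : ℕ, f i (Function.update a (g i1 i2) u) =
        f i (Function.update a (g i1 i2) u') := by
      intro u u'
      rw [hf, hf]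
      congr 2
      · apply Finset.sum_congr rfl
        intro j hj
        simp only [Finset.mem_Ico] at hj
        rw [hfix u j i hj.1 hj.2 (Or.inr hne2), hfix u' j i hj.1 hj.2 (Or.inr hne2)]
      · apply Finset.sum_congr rfl
        intro j hj
        simp only [Finset.mem_Ioc] at hj
        rw [hfix u i j hi.1 hj.1 (Or.inl hne1), hfix u' i j hi.1 hj.1 (Or.inl hne1)]
    exact ⟨key 0 1, key 1 2⟩
  · have hexp : ∀ u : ℕ, f i1 (Function.update a (g i1 i2) u) =
        ((∑ j ∈ Finset.Ico 1 i1, if a (g j i1) = 2 then 1 else 0) +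
         ((if u = 1 then 1 else 0) +
          ∑ j ∈ (Finset.Ioc i1 n).erase i2, if a (g i1 j) = 1 then 1 else 0)) % 2 := by
      intro u
      rw [hf]
      congr 2
      · apply Finset.sum_congr rfl
        intro j hj
        simp only [Finset.mem_Ico] at hj
        rw [hfix u j i1 hj.1 hj.2 (Or.inr (by omega))]
      · have hmem : i2 ∈ Finset.Ioc i1 n := Finset.mem_Ioc.mpr ⟨hi12, hi2⟩
        rw [← Finset.add_sum_erase _ _ hmem]
        congr 1
        · simp [Function.update_self]
        · apply Finset.sum_congr rfl
          intro j hj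
          simp only [Finset.mem_erase, Finset.mem_Ioc] at hj
          rw [hfix u i1 j hi1 hj.2.1 (Or.inr hj.1)]
    constructor
    · rw [hexp 0, hexp 2]; norm_num
    · rw [hexp 0, hexp 1]
      norm_num
      omega
  · have hexp : ∀ u : ℕ, f i2 (Function.update a (g i1 i2) u) =
        (((if u = 2 then 1 else 0) +
          ∑ j ∈ (Finset.Ico 1 i2).erase i1, if a (g j i2) = 2 then 1 else 0) +
         (∑ j ∈ Finset.Ioc i2 n, if a (g i2 j) = 1 then 1 else 0)) % 2 := by
      intro u
      rw [hf]
      congr 2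
      · have hmem : i1 ∈ Finset.Ico 1 i2 := Finset.mem_Ico.mpr ⟨hi1, hi12⟩
        rw [← Finset.add_sum_erase _ _ hmem]
        congr 1
        · simp [Function.update_self]
        · apply Finset.sum_congr rfl
          intro j hj
          simp only [Finset.mem_erase, Finset.mem_Ico] at hj
          rw [hfix u j i2 hj.2.1 hj.2.2 (Or.inl hj.1)]
      · apply Finset.sum_congr rfl
        intro j hj
        simp only [Finset.mem_Ioc] at hj
        rw [hfix u i2 j (by omega) hj.1 (Or.inl (by omega))]
    constructor
    · rw [hexp 0, hexp 1]; norm_num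
    · rw [hexp 0, hexp 2]
      norm_num
      omega
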